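/- Let W ∈ ℝ^{n×p} and U ∈ ℝ^{p×n} with p ≥ n, let Σ ∈ ℝ^{n×n} be symmetric positive definite, and let γ > 0. If (I − WU)Σ U^T = γ W and W^T (I − WU) Σ = γ U, then U = W^T. -/

import Mathlib

open Matrix

/-- At critical points of the regularized two-layer linear autoencoder loss,
the two weight matrices are transposes of each other: if
`(I - W*U) * Σ * Uᵀ = γ • W` and `Wᵀ * (I - W*U) * Σ = γ • U`, then `U = Wᵀ`. -/
theorem stmt_2 {n p : ℕ} (hpn : n ≤ p) (γ : ℝ) (hγ : 0 < γ)
    (Sig : Matrix (Fin n) (Fin n) ℝ) (hSig : Sig.PosDef)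
    (W : Matrix (Fin n) (Fin p) ℝ) (U : Matrix (Fin p) (Fin n) ℝ)
    (h1 : (1 - W * U) * Sig * Uᵀ = γ • W)
    (h2 : Wᵀ * (1 - W * U) * Sig = γ • U) :
    U = Wᵀ := by
  have hss : Sigᵀ = Sig := by
    have := hSig.1.eq
    rwa [conjTranspose_eq_transpose_of_trivial] at this
  have e1 : (1 - W * U) * Sig * Uᵀ * Wᵀ = γ • (W * Wᵀ) := by
    rw [h1, Matrix.smul_mul]
  have e1t : W * U * Sig * (1 - W * U)ᵀ = γ • (W * Wᵀ) := by
    have := congrArg transpose e1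
    simpa [transpose_mul, transpose_smul, hss, Matrix.mul_assoc] using this
  have hsymT : Sig * (Uᵀ * Wᵀ) = W * U * Sig := by
    have key := e1.trans e1t.symm
    have expand1 : (1 - W * U) * Sig * Uᵀ * Wᵀ
        = Sig * (Uᵀ * Wᵀ) - W * (U * (Sig * (Uᵀ * Wᵀ))) := by
      simp [sub_mul, one_mul, Matrix.mul_assoc]
    have expand2 : W * U * Sig * (1 - W * U)ᵀ
        = W * (U * Sig) - W * (U * (Sig * (Uᵀ * Wᵀ))) := by
      rw [transpose_sub, transpose_one, transpose_mul]
      simp [mul_sub, mul_one, Matrix.mul_assoc]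
    rw [expand1, expand2] at key
    have := sub_left_inj.mp key
    simpa [Matrix.mul_assoc] using this
  set M : Matrix (Fin n) (Fin n) ℝ := Sig - W * U * Sig with hMdef
  have hM2 : M = Sig - Sig * (Uᵀ * Wᵀ) := by rw [hsymT]
  have hMt : Mᵀ = M := by
    rw [hMdef, transpose_sub, hss, transpose_mul, transpose_mul, hss,
      ← Matrix.mul_assoc, Matrix.mul_assoc, hsymT, Matrix.mul_assoc]
  have hW : M * Uᵀ = γ • W := by
    rw [hMdef, ← h1]; simp [sub_mul, one_mul]
  have hU : Wᵀ * M = γ • U := by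
    rw [hMdef, ← h2]; simp [Matrix.mul_assoc, sub_mul, mul_sub, one_mul]
  have hWt : U * M = γ • Wᵀ := by
    have := congrArg transpose hW
    simpa [transpose_mul, transpose_smul, hMt] using this
  have hMW : M * W = γ • Uᵀ := by
    have := congrArg transpose hU
    simpa [transpose_mul, transpose_smul, hMt] using this
  have hD : (M + γ • (1 : Matrix (Fin n) (Fin n) ℝ)) * (Uᵀ - W) = 0 := by
    rw [Matrix.add_mul, Matrix.mul_sub, Matrix.mul_sub, hW, hMW, Matrix.smul_mul, Matrix.smul_mul,
      Matrix.one_mul, Matrix.one_mul]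
    abel
  have hdet : (M + γ • (1 : Matrix (Fin n) (Fin n) ℝ)).det ≠ 0 := by
    intro h0
    obtain ⟨v, hv0, hv⟩ := (Matrix.exists_mulVec_eq_zero_iff).2 h0
    have hv1 : M *ᵥ v = (-γ) • v := by
      have : M *ᵥ v + γ • v = 0 := by
        have := hv
        rwa [Matrix.add_mulVec, Matrix.smul_mulVec, Matrix.one_mulVec] at this
      have := eq_neg_of_add_eq_zero_left this
      rw [this, neg_smul]
    have hWv : Wᵀ *ᵥ v = -(U *ᵥ v) := by
      have h3 : (U * M) *ᵥ v = (γ • Wᵀ) *ᵥ v := by rw [hWt]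
      rw [← Matrix.mulVec_mulVec, hv1, Matrix.mulVec_smul, Matrix.smul_mulVec] at h3
      have : γ • (-(U *ᵥ v)) = γ • (Wᵀ *ᵥ v) := by
        rw [← h3]; simp [neg_smul, smul_comm]
      exact (smul_right_injective _ (ne_of_gt hγ) this).symm
    set w : Fin n → ℝ := v + Uᵀ *ᵥ (U *ᵥ v) with hwdef
    have hSw : Sig *ᵥ w = (-γ) • v := by
      rw [← hv1, hM2, Matrix.sub_mulVec, hwdef, Matrix.mulVec_add]
      rw [show ((Sig * (Uᵀ * Wᵀ)) *ᵥ v) = Sig *ᵥ (Uᵀ *ᵥ (Wᵀ *ᵥ v)) by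
        simp [← Matrix.mulVec_mulVec], hWv]
      simp [Matrix.mulVec_neg, sub_neg_eq_add]
    have hwv : w ⬝ᵥ v = v ⬝ᵥ v + (U *ᵥ v) ⬝ᵥ (U *ᵥ v) := by
      rw [hwdef, add_dotProduct]
      congr 1
      rw [Matrix.mulVec_transpose, ← Matrix.dotProduct_mulVec]
    have hnonneg : (0:ℝ) ≤ w ⬝ᵥ (Sig *ᵥ w) := by simpa using hSig.posSemidef.dotProduct_mulVec_nonneg w
    rw [hSw] at hnonneg
    have hval : w ⬝ᵥ ((-γ) • v) = -γ * (v ⬝ᵥ v + (U *ᵥ v) ⬝ᵥ (U *ᵥ v)) := by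
      rw [dotProduct_smul, ← hwv]; simp [smul_eq_mul]
    rw [hval] at hnonneg
    have ha : 0 < v ⬝ᵥ v := by
      simpa using (dotProduct_self_star_pos_iff (v := v)).2 hv0
    have hb : 0 ≤ (U *ᵥ v) ⬝ᵥ (U *ᵥ v) := by
      simpa using dotProduct_self_star_nonneg (U *ᵥ v)
    nlinarith
  have hunit : IsUnit (M + γ • (1 : Matrix (Fin n) (Fin n) ℝ)).det :=
    isUnit_iff_ne_zero.2 hdet
  have hzero : Uᵀ - W = 0 := by
    have := congrArg (fun X => (M + γ • (1 : Matrix (Fin n) (Fin n) ℝ))⁻¹ * X) hD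
    simpa [← Matrix.mul_assoc, Matrix.nonsing_inv_mul _ hunit] using this
  have : Uᵀ = W := sub_eq_zero.mp hzero
  calc U = Uᵀᵀ := (transpose_transpose U).symm
    _ = Wᵀ := by rw [this]
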